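/- The clone generated by g₁ together with the constant functions true and false, where g₁(x,y,z) = x ∧ (y ∨ ¬z), is the full clone: every Boolean function f : (Fin n → Bool) → Bool with n ≥ 1 belongs to it. -/
import Mathlib


/-- The clone generated by a set `B` of Boolean functions: the smallest family containing all
projections and `B`, and closed under composition. -/
inductive InClone (B : (k : ℕ) → ((Fin k → Bool) → Bool) → Prop) :
    (n : ℕ) → ((Fin n → Bool) → Bool) → Prop
  | proj {n : ℕ} (i : Fin n) : InClone B n (fun x => x i)
  | base {k : ℕ} {g : (Fin k → Bool) → Bool} (hg : B k g) : InClone B k g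
  | comp {k n : ℕ} {g : (Fin k → Bool) → Bool} {h : Fin k → ((Fin n → Bool) → Bool)}
      (hg : InClone B k g) (hh : ∀ i, InClone B n (h i)) :
      InClone B n (fun x => g (fun i => h i x))

/-- g₁(x,y,z) = x ∧ (y ∨ ¬z). -/
def g1 : (Fin 3 → Bool) → Bool := fun x => x 0 && (x 1 || !x 2)

/-- The generating set {g₁, 1, 0}: g₁ together with the constants true and false (arity 1). -/
inductive G1CBase : (k : ℕ) → ((Fin k → Bool) → Bool) → Prop
  | g1 : G1CBase 3 g1
  | one : G1CBase 1 (fun _ => true)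
  | zero : G1CBase 1 (fun _ => false)

namespace CloneAux

lemma ctrue {n : ℕ} (hn : 0 < n) : InClone G1CBase n (fun _ => true) :=
  InClone.comp (InClone.base G1CBase.one) (fun _ => InClone.proj ⟨0, hn⟩)

lemma cfalse {n : ℕ} (hn : 0 < n) : InClone G1CBase n (fun _ => false) :=
  InClone.comp (InClone.base G1CBase.zero) (fun _ => InClone.proj ⟨0, hn⟩)

lemma notc {n : ℕ} (hn : 0 < n) {p : (Fin n → Bool) → Bool}
    (hp : InClone G1CBase n p) : InClone G1CBase n (fun x => !(p x)) := by
  have hh : ∀ i : Fin 3, InClone G1CBase n (![fun _ => true, fun _ => false, p] i) := by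
    intro i; fin_cases i
    · exact ctrue hn
    · exact cfalse hn
    · exact hp
  have h := InClone.comp (InClone.base G1CBase.g1) hh
  have e : (fun x => g1 (fun i => ![fun _ => true, fun _ => false, p] i x))
      = (fun x => !(p x)) := by
    funext x; simp [g1]
  rwa [e] at h

lemma andc {n : ℕ} (hn : 0 < n) {p q : (Fin n → Bool) → Bool}
    (hp : InClone G1CBase n p) (hq : InClone G1CBase n q) :
    InClone G1CBase n (fun x => p x && q x) := by
  have hh : ∀ i : Fin 3, InClone G1CBase n (![p, q, fun _ => true] i) := by
    intro i; fin_cases i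
    · exact hp
    · exact hq
    · exact ctrue hn
  have h := InClone.comp (InClone.base G1CBase.g1) hh
  have e : (fun x => g1 (fun i => ![p, q, fun _ => true] i x))
      = (fun x => p x && q x) := by
    funext x; simp [g1]
  rwa [e] at h

lemma orc {n : ℕ} (hn : 0 < n) {p q : (Fin n → Bool) → Bool}
    (hp : InClone G1CBase n p) (hq : InClone G1CBase n q) :
    InClone G1CBase n (fun x => p x || q x) := by
  have h := notc hn (andc hn (notc hn hp) (notc hn hq))
  have e : (fun x => !((!(p x)) && (!(q x)))) = (fun x => p x || q x) := by
    funext x; cases p x <;> cases q x <;> rfl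
  rwa [e] at h

lemma constc {n : ℕ} (hn : 0 < n) (b : Bool) : InClone G1CBase n (fun _ => b) := by
  cases b
  · exact cfalse hn
  · exact ctrue hn

lemma lift {m : ℕ} {g : (Fin m → Bool) → Bool} (hg : InClone G1CBase m g) :
    InClone G1CBase (m + 1) (fun x => g (fun i => x i.succ)) :=
  InClone.comp hg (fun i => InClone.proj i.succ)

end CloneAux

open CloneAux in
/-- The clone generated by {g₁, 1, 0} is the full clone. -/
theorem clone_g1_consts_full {n : ℕ} (hn : 1 ≤ n) (f : (Fin n → Bool) → Bool) :
    InClone G1CBase n f := by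
  induction n with
  | zero => omega
  | succ m ih =>
    rcases Nat.eq_zero_or_pos m with hm | hm
    · subst hm
      -- arity 1: four possible functions
      have hx : ∀ x : Fin 1 → Bool, x = fun _ => x 0 := by
        intro x; funext i; fin_cases i; rfl
      have key : f = fun x => (x 0 && f (fun _ => true)) || (!(x 0) && f (fun _ => false)) := by
        funext x
        rw [hx x]
        cases h0 : x 0 <;> simp [h0]
      rw [key]
      exact orc one_pos (andc one_pos (InClone.proj 0) (constc one_pos _))
        (andc one_pos (notc one_pos (InClone.proj 0)) (constc one_pos _))
    · -- arity m+1, m ≥ 1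
      have hmn : 0 < m + 1 := Nat.succ_pos m
      have hft := lift (ih hm (fun y => f (Fin.cons true y)))
      have hff := lift (ih hm (fun y => f (Fin.cons false y)))
      have key : f = fun x =>
          ((x 0 && (fun y : Fin (m+1) → Bool => f (Fin.cons true (fun i => y i.succ))) x)
            || (!(x 0) && (fun y : Fin (m+1) → Bool => f (Fin.cons false (fun i => y i.succ))) x)) := by
        funext x
        have hx : x = Fin.cons (x 0) (fun i => x i.succ) := by
          funext i
          exact (Fin.cons_self_tail x).symm ▸ rfl
        cases h0 : x 0 <;> simp [h0] <;>
          · conv_lhs => rw [show x = Fin.cons (x 0) (fun i => x i.succ) from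
              (Fin.cons_self_tail x).symm]
            rw [h0]
      rw [key]
      exact orc hmn (andc hmn (InClone.proj 0) hft) (andc hmn (notc hmn (InClone.proj 0)) hff)
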